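/- Let (A⊗V,μ_{A⊗V}) and (A⊗W,μ_{A⊗W}) be weak crossed products with preunits ν_V and ν_W respectively. If they are equivalent (i.e. there is a monoid isomorphism α:A×V→A×W of left A-modules for the actions φ_{A×V} and φ_{A×W}), then there exist morphisms T:A⊗V→A⊗W and S:A⊗W→A⊗V of left A-modules for the actions μ_A⊗V and μ_A⊗W such that T∘ν_V=ν_W, T∘μ_{A⊗V}=μ_{A⊗W}∘(T⊗T), S∘T=∇_{A⊗V}, and T∘S=∇_{A⊗W}. -/

import Mathlib

open CategoryTheory MonoidalCategory

universe v u

namespace WeakCrossed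

variable {C : Type u} [Category.{v} C] [MonoidalCategory C]

/-- The monoid axioms for a triple `(A, η, μ)` in a monoidal category. -/
def IsMon (A : C) (eta : 𝟙_ C ⟶ A) (mu : A ⊗ A ⟶ A) : Prop :=
  (eta ▷ A) ≫ mu = (λ_ A).hom ∧ (A ◁ eta) ≫ mu = (ρ_ A).hom ∧
    (mu ▷ A) ≫ mu = (α_ A A A).hom ≫ (A ◁ mu) ≫ mu

/-- The morphism `(μ_A ⊗ Y) ∘ (A ⊗ f) : (A ⊗ X) ⊗ Z ⟶ A ⊗ Y` for `f : X ⊗ Z ⟶ A ⊗ Y`. -/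
def phi (A : C) {X Z Y : C} (mu : A ⊗ A ⟶ A) (f : X ⊗ Z ⟶ A ⊗ Y) :
    (A ⊗ X) ⊗ Z ⟶ A ⊗ Y :=
  (α_ A X Z).hom ≫ (A ◁ f) ≫ (α_ A A Y).inv ≫ (mu ▷ Y)

/-- The measuring condition `(μ_A ⊗ V) ∘ (A ⊗ ψ) ∘ (ψ ⊗ A) = ψ ∘ (V ⊗ μ_A)`. -/
def Measuring (A V : C) (mu : A ⊗ A ⟶ A) (psi : V ⊗ A ⟶ A ⊗ V) : Prop :=
  (psi ▷ A) ≫ phi A mu psi = (α_ V A A).hom ≫ (V ◁ mu) ≫ psi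

/-- The idempotent `∇_{A⊗V} = (μ_A ⊗ V) ∘ (A ⊗ ψ) ∘ (A ⊗ V ⊗ η_A)`. -/
def nabla (A V : C) (eta : 𝟙_ C ⟶ A) (mu : A ⊗ A ⟶ A) (psi : V ⊗ A ⟶ A ⊗ V) :
    A ⊗ V ⟶ A ⊗ V :=
  (ρ_ (A ⊗ V)).inv ≫ ((A ⊗ V) ◁ eta) ≫ phi A mu psi

/-- The twisted condition
`(μ_A ⊗ V) ∘ (A ⊗ ψ) ∘ (σ ⊗ A) = (μ_A ⊗ V) ∘ (A ⊗ σ) ∘ (ψ ⊗ V) ∘ (V ⊗ ψ)`. -/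
def Twisted (A V : C) (mu : A ⊗ A ⟶ A) (psi : V ⊗ A ⟶ A ⊗ V)
    (sig : V ⊗ V ⟶ A ⊗ V) : Prop :=
  (sig ▷ A) ≫ phi A mu psi =
    (α_ V V A).hom ≫ (V ◁ psi) ≫ (α_ V A V).inv ≫ (psi ▷ V) ≫ phi A mu sig

/-- The cocycle condition
`(μ_A ⊗ V) ∘ (A ⊗ σ) ∘ (σ ⊗ V) = (μ_A ⊗ V) ∘ (A ⊗ σ) ∘ (ψ ⊗ V) ∘ (V ⊗ σ)`. -/
def Cocycle (A V : C) (mu : A ⊗ A ⟶ A) (psi : V ⊗ A ⟶ A ⊗ V)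
    (sig : V ⊗ V ⟶ A ⊗ V) : Prop :=
  (sig ▷ V) ≫ phi A mu sig =
    (α_ V V V).hom ≫ (V ◁ sig) ≫ (α_ V A V).inv ≫ (psi ▷ V) ≫ phi A mu sig

/-- The weak crossed product multiplication
`μ_{A⊗V} = (μ_A ⊗ V) ∘ (μ_A ⊗ σ) ∘ (A ⊗ ψ ⊗ V)`. -/
def prodAV (A V : C) (mu : A ⊗ A ⟶ A) (psi : V ⊗ A ⟶ A ⊗ V)
    (sig : V ⊗ V ⟶ A ⊗ V) : (A ⊗ V) ⊗ (A ⊗ V) ⟶ A ⊗ V :=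
  (α_ A V (A ⊗ V)).hom ≫ (A ◁ ((α_ V A V).inv ≫ (psi ▷ V) ≫ (α_ A V V).hom)) ≫
    (α_ A A (V ⊗ V)).inv ≫ (mu ⊗ₘ sig) ≫ (α_ A A V).inv ≫ (mu ▷ V)

/-- The morphism `η_A ⊗ V : V ⟶ A ⊗ V`. -/
def etaT (A V : C) (eta : 𝟙_ C ⟶ A) : V ⟶ A ⊗ V := (λ_ V).inv ≫ (eta ▷ V)

/-- The morphism `β_ν = (μ_A ⊗ V) ∘ (A ⊗ ν) : A ⟶ A ⊗ V`. -/
def beta (A V : C) (mu : A ⊗ A ⟶ A) (nu : 𝟙_ C ⟶ A ⊗ V) : A ⟶ A ⊗ V :=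
  (ρ_ A).inv ≫ (A ◁ nu) ≫ (α_ A A V).inv ≫ (mu ▷ V)

/-- Preunit condition (pre1):
`(μ_A ⊗ V) ∘ (A ⊗ σ) ∘ (ψ ⊗ V) ∘ (V ⊗ ν) = ∇_{A⊗V} ∘ (η_A ⊗ V)`. -/
def Pre1 (A V : C) (eta : 𝟙_ C ⟶ A) (mu : A ⊗ A ⟶ A) (psi : V ⊗ A ⟶ A ⊗ V)
    (sig : V ⊗ V ⟶ A ⊗ V) (nu : 𝟙_ C ⟶ A ⊗ V) : Prop :=
  (ρ_ V).inv ≫ (V ◁ nu) ≫ (α_ V A V).inv ≫ (psi ▷ V) ≫ phi A mu sig =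
    etaT A V eta ≫ nabla A V eta mu psi

/-- Preunit condition (pre2):
`(μ_A ⊗ V) ∘ (A ⊗ σ) ∘ (ν ⊗ V) = ∇_{A⊗V} ∘ (η_A ⊗ V)`. -/
def Pre2 (A V : C) (eta : 𝟙_ C ⟶ A) (mu : A ⊗ A ⟶ A) (psi : V ⊗ A ⟶ A ⊗ V)
    (sig : V ⊗ V ⟶ A ⊗ V) (nu : 𝟙_ C ⟶ A ⊗ V) : Prop :=
  (λ_ V).inv ≫ (nu ▷ V) ≫ phi A mu sig = etaT A V eta ≫ nabla A V eta mu psi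

/-- Preunit condition (pre3): `(μ_A ⊗ V) ∘ (A ⊗ ψ) ∘ (ν ⊗ A) = β_ν`. -/
def Pre3 (A V : C) (mu : A ⊗ A ⟶ A) (psi : V ⊗ A ⟶ A ⊗ V)
    (nu : 𝟙_ C ⟶ A ⊗ V) : Prop :=
  (λ_ A).inv ≫ (nu ▷ A) ≫ phi A mu psi = beta A V mu nu

/-- `(A ⊗ V, μ_{A⊗V})` is a weak crossed product: measuring, twisted and cocycle
conditions hold and `∇_{A⊗V} ∘ σ = σ`. -/
def WCP (A V : C) (eta : 𝟙_ C ⟶ A) (mu : A ⊗ A ⟶ A) (psi : V ⊗ A ⟶ A ⊗ V)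
    (sig : V ⊗ V ⟶ A ⊗ V) : Prop :=
  Measuring A V mu psi ∧ Twisted A V mu psi sig ∧ Cocycle A V mu psi sig ∧
    sig ≫ nabla A V eta mu psi = sig

/-- `(A ⊗ V, μ_{A⊗V})` is a weak crossed product with preunit `ν`. -/
def WCPpre (A V : C) (eta : 𝟙_ C ⟶ A) (mu : A ⊗ A ⟶ A) (psi : V ⊗ A ⟶ A ⊗ V)
    (sig : V ⊗ V ⟶ A ⊗ V) (nu : 𝟙_ C ⟶ A ⊗ V) : Prop :=
  WCP A V eta mu psi sig ∧ Pre1 A V eta mu psi sig nu ∧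
    Pre2 A V eta mu psi sig nu ∧ Pre3 A V mu psi nu

/-- `(μ_A ⊗ Y) ∘ (A ⊗ γ) : A ⊗ X ⟶ A ⊗ Y` for `γ : X ⟶ A ⊗ Y`. -/
def tmap (A : C) {X Y : C} (mu : A ⊗ A ⟶ A) (g : X ⟶ A ⊗ Y) : A ⊗ X ⟶ A ⊗ Y :=
  (A ◁ g) ≫ (α_ A A Y).inv ≫ (mu ▷ Y)

/-- Left `A`-linearity of `T : A ⊗ X ⟶ A ⊗ Y`:
`T ∘ (μ_A ⊗ X) = (μ_A ⊗ Y) ∘ (A ⊗ T)`. -/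
def LeftLin (A : C) {X Y : C} (mu : A ⊗ A ⟶ A) (T : A ⊗ X ⟶ A ⊗ Y) : Prop :=
  (mu ▷ X) ≫ T = (α_ A A X).hom ≫ (A ◁ T) ≫ (α_ A A Y).inv ≫ (mu ▷ Y)

/-- `ν` is a preunit for the associative product `m` on `X`. -/
def IsPreunit {X : C} (m : X ⊗ X ⟶ X) (nu : 𝟙_ C ⟶ X) : Prop :=
  (ρ_ X).inv ≫ (X ◁ nu) ≫ m = (λ_ X).inv ≫ (nu ▷ X) ≫ m ∧
  (ρ_ X).inv ≫ (X ◁ nu) ≫ m =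
    (ρ_ X).inv ≫ (X ◁ ((λ_ (𝟙_ C)).inv ≫ (nu ⊗ₘ nu) ≫ m)) ≫ m

/-- Brzeziński normalization conditions: `ψ ∘ (η_V ⊗ A) = A ⊗ η_V`,
`ψ ∘ (V ⊗ η_A) = η_A ⊗ V`, `σ ∘ (η_V ⊗ V) = σ ∘ (V ⊗ η_V) = η_A ⊗ V`. -/
def BrzNorm (A V : C) (eta : 𝟙_ C ⟶ A) (etaV : 𝟙_ C ⟶ V) (psi : V ⊗ A ⟶ A ⊗ V)
    (sig : V ⊗ V ⟶ A ⊗ V) : Prop :=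
  (λ_ A).inv ≫ (etaV ▷ A) ≫ psi = (ρ_ A).inv ≫ (A ◁ etaV) ∧
  (ρ_ V).inv ≫ (V ◁ eta) ≫ psi = (λ_ V).inv ≫ (eta ▷ V) ∧
  (λ_ V).inv ≫ (etaV ▷ V) ≫ sig = (λ_ V).inv ≫ (eta ▷ V) ∧
  (ρ_ V).inv ≫ (V ◁ etaV) ≫ sig = (λ_ V).inv ≫ (eta ▷ V)

/-- `γ = ψ ∘ (V ⊗ η)` -/
def gam (A V : C) (eta : 𝟙_ C ⟶ A) (psi : V ⊗ A ⟶ A ⊗ V) : V ⟶ A ⊗ V :=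
  (ρ_ V).inv ≫ (V ◁ eta) ≫ psi

/-- `ω = (μ⊗V)∘(A⊗σ)∘(ψ⊗V)` -/
def om (A V : C) (mu : A ⊗ A ⟶ A) (psi : V ⊗ A ⟶ A ⊗ V) (sig : V ⊗ V ⟶ A ⊗ V) :
    V ⊗ (A ⊗ V) ⟶ A ⊗ V :=
  (α_ V A V).inv ≫ (psi ▷ V) ≫ phi A mu sig

section Lemmas
variable {A : C} {eta : 𝟙_ C ⟶ A} {mu : A ⊗ A ⟶ A}

lemma whiskerLeft_tmap {X X' Y : C} (x : X' ⟶ X) (g : X ⟶ A ⊗ Y) :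
    (A ◁ x) ≫ tmap A mu g = tmap A mu (x ≫ g) := by simp [tmap]

lemma mu_tmap (hA : IsMon A eta mu) {X Y : C} (g : X ⟶ A ⊗ Y) :
    (mu ▷ X) ≫ tmap A mu g = (α_ A A X).hom ≫ tmap A mu (tmap A mu g) := by
  calc (mu ▷ X) ≫ tmap A mu g
      = ((A ⊗ A) ◁ g) ≫ (α_ (A ⊗ A) A Y).inv ≫ (((mu ▷ A) ≫ mu) ▷ Y) := by
        simp only [tmap]; rw [← Category.assoc, ← whisker_exchange]; monoidal
    _ = ((A ⊗ A) ◁ g) ≫ (α_ (A ⊗ A) A Y).inv ≫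
          (((α_ A A A).hom ≫ (A ◁ mu) ≫ mu) ▷ Y) := by rw [hA.2.2]
    _ = (α_ A A X).hom ≫ tmap A mu (tmap A mu g) := by simp only [tmap]; monoidal

lemma tmap_tmap (hA : IsMon A eta mu) {X Y Z : C} (g : X ⟶ A ⊗ Y) (h : Y ⟶ A ⊗ Z) :
    tmap A mu g ≫ tmap A mu h = tmap A mu (g ≫ tmap A mu h) := by
  calc tmap A mu g ≫ tmap A mu h
      = (A ◁ g) ≫ (α_ A A Y).inv ≫ ((mu ▷ Y) ≫ tmap A mu h) := by simp [tmap]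
    _ = (A ◁ g) ≫ (α_ A A Y).inv ≫ (α_ A A Y).hom ≫ tmap A mu (tmap A mu h) := by
        rw [mu_tmap hA]
    _ = tmap A mu (g ≫ tmap A mu h) := by simp [tmap]

variable {V : C} {psi : V ⊗ A ⟶ A ⊗ V} {sig : V ⊗ V ⟶ A ⊗ V}

lemma nabla_eq : nabla A V eta mu psi = tmap A mu (gam A V eta psi) := by
  simp only [nabla, phi, tmap, gam]; monoidal

lemma tmap_nabla (hA : IsMon A eta mu) {Y : C} (x : Y ⟶ A ⊗ V)
    (hx : x ≫ nabla A V eta mu psi = x) :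
    tmap A mu x ≫ nabla A V eta mu psi = tmap A mu x := by
  rw [nabla_eq, tmap_tmap hA, ← nabla_eq, hx]

lemma lin_nabla (hA : IsMon A eta mu) :
    (mu ▷ V) ≫ nabla A V eta mu psi =
      (α_ A A V).hom ≫ (A ◁ nabla A V eta mu psi) ≫ (α_ A A V).inv ≫ (mu ▷ V) := by
  rw [nabla_eq, mu_tmap hA]; simp [tmap]

lemma prod_eq (hA : IsMon A eta mu) :
    prodAV A V mu psi sig = (α_ A V (A ⊗ V)).hom ≫ tmap A mu (om A V mu psi sig) := by
  calc prodAV A V mu psi sig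
      = (α_ A V (A ⊗ V)).hom ≫ (A ◁ ((α_ V A V).inv ≫ (psi ▷ V) ≫ (α_ A V V).hom)) ≫
          (α_ A A (V ⊗ V)).inv ≫ ((mu ▷ (V ⊗ V)) ≫ tmap A mu sig) := by
        simp only [prodAV, MonoidalCategory.tensorHom_def, tmap]; monoidal
    _ = (α_ A V (A ⊗ V)).hom ≫ (A ◁ ((α_ V A V).inv ≫ (psi ▷ V) ≫ (α_ A V V).hom)) ≫
          (α_ A A (V ⊗ V)).inv ≫ (α_ A A (V ⊗ V)).hom ≫ tmap A mu (tmap A mu sig) := by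
        rw [mu_tmap hA]
    _ = (α_ A V (A ⊗ V)).hom ≫ tmap A mu (om A V mu psi sig) := by
        simp only [om, phi, tmap]; monoidal


lemma phi_eq {X Z Y : C} (f : X ⊗ Z ⟶ A ⊗ Y) :
    phi A mu f = (α_ A X Z).hom ≫ tmap A mu f := by simp [phi, tmap]

lemma prod_nabla (hA : IsMon A eta mu) (hs : sig ≫ nabla A V eta mu psi = sig) :
    prodAV A V mu psi sig ≫ nabla A V eta mu psi = prodAV A V mu psi sig := by
  have h2 : sig ≫ tmap A mu (gam A V eta psi) = sig := by rw [← nabla_eq, hs]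
  have h3 : om A V mu psi sig ≫ tmap A mu (gam A V eta psi) = om A V mu psi sig := by
    simp only [om, phi_eq, Category.assoc]
    rw [tmap_tmap hA, h2]
  rw [prod_eq hA, nabla_eq, Category.assoc, tmap_tmap hA, h3]

lemma nu_nabla (hA : IsMon A eta mu) {nu : 𝟙_ C ⟶ A ⊗ V}
    (hp3 : (λ_ A).inv ≫ (nu ▷ A) ≫ phi A mu psi =
      (ρ_ A).inv ≫ (A ◁ nu) ≫ (α_ A A V).inv ≫ (mu ▷ V)) :
    nu ≫ nabla A V eta mu psi = nu := by
  calc nu ≫ nabla A V eta mu psi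
      = (λ_ (𝟙_ C)).inv ≫ ((nu ▷ (𝟙_ C)) ≫ ((A ⊗ V) ◁ eta)) ≫ phi A mu psi := by
        simp only [nabla]; monoidal
    _ = (λ_ (𝟙_ C)).inv ≫ (((𝟙_ C) ◁ eta) ≫ (nu ▷ A)) ≫ phi A mu psi := by
        rw [← whisker_exchange]
    _ = eta ≫ (λ_ A).inv ≫ (nu ▷ A) ≫ phi A mu psi := by monoidal
    _ = eta ≫ (ρ_ A).inv ≫ (A ◁ nu) ≫ (α_ A A V).inv ≫ (mu ▷ V) := by rw [hp3]
    _ = (ρ_ (𝟙_ C)).inv ≫ ((eta ▷ (𝟙_ C)) ≫ (A ◁ nu)) ≫ (α_ A A V).inv ≫ (mu ▷ V) := by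
        monoidal
    _ = (ρ_ (𝟙_ C)).inv ≫ (((𝟙_ C) ◁ nu) ≫ (eta ▷ (A ⊗ V))) ≫ (α_ A A V).inv ≫ (mu ▷ V) := by
        rw [whisker_exchange]
    _ = (ρ_ (𝟙_ C)).inv ≫ ((𝟙_ C) ◁ nu) ≫ (α_ (𝟙_ C) A V).inv ≫ (((eta ▷ A) ≫ mu) ▷ V) := by
        monoidal
    _ = (ρ_ (𝟙_ C)).inv ≫ ((𝟙_ C) ◁ nu) ≫ (α_ (𝟙_ C) A V).inv ≫ ((λ_ A).hom ▷ V) := by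
      rw [hA.1]
    _ = nu := by monoidal

lemma IC4 (hA : IsMon A eta mu) (hm : Measuring A V mu psi) :
    (gam A V eta psi ▷ (A ⊗ V)) ≫ (α_ A V (A ⊗ V)).hom ≫ tmap A mu (om A V mu psi sig)
      = om A V mu psi sig := by
  calc (gam A V eta psi ▷ (A ⊗ V)) ≫ (α_ A V (A ⊗ V)).hom ≫ tmap A mu (om A V mu psi sig)
      = (gam A V eta psi ▷ (A ⊗ V)) ≫ (α_ A V (A ⊗ V)).hom ≫
          (A ◁ ((α_ V A V).inv ≫ (psi ▷ V) ≫ (α_ A V V).hom ≫ (A ◁ sig))) ≫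
          (A ◁ (α_ A A V).inv) ≫ (α_ A (A ⊗ A) V).inv ≫ (((A ◁ mu) ≫ mu) ▷ V) := by
        simp only [om, phi, tmap]; monoidal
    _ = (gam A V eta psi ▷ (A ⊗ V)) ≫ (α_ A V (A ⊗ V)).hom ≫
          (A ◁ ((α_ V A V).inv ≫ (psi ▷ V) ≫ (α_ A V V).hom ≫ (A ◁ sig))) ≫
          (A ◁ (α_ A A V).inv) ≫ (α_ A (A ⊗ A) V).inv ≫
          (((α_ A A A).inv ≫ ((mu ▷ A) ≫ mu)) ▷ V) := by
        rw [show (A ◁ mu) ≫ mu = (α_ A A A).inv ≫ ((mu ▷ A) ≫ mu) from by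
          rw [hA.2.2]; simp]
    _ = (gam A V eta psi ▷ (A ⊗ V)) ≫ (α_ A V (A ⊗ V)).hom ≫
          (A ◁ ((α_ V A V).inv ≫ (psi ▷ V) ≫ (α_ A V V).hom)) ≫
          (α_ A A (V ⊗ V)).inv ≫ (((A ⊗ A) ◁ sig) ≫ (mu ▷ (A ⊗ V))) ≫
          (α_ A A V).inv ≫ (mu ▷ V) := by monoidal
    _ = (gam A V eta psi ▷ (A ⊗ V)) ≫ (α_ A V (A ⊗ V)).hom ≫
          (A ◁ ((α_ V A V).inv ≫ (psi ▷ V) ≫ (α_ A V V).hom)) ≫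
          (α_ A A (V ⊗ V)).inv ≫ ((mu ▷ (V ⊗ V)) ≫ (A ◁ sig)) ≫
          (α_ A A V).inv ≫ (mu ▷ V) := by rw [whisker_exchange]
    _ = (α_ V A V).inv ≫ ((((ρ_ V).inv ≫ (V ◁ eta)) ▷ A) ▷ V) ≫
          (((psi ▷ A) ≫ phi A mu psi) ▷ V) ≫ phi A mu sig := by
        simp only [gam, phi]; monoidal
    _ = (α_ V A V).inv ≫ ((((ρ_ V).inv ≫ (V ◁ eta)) ▷ A) ▷ V) ≫
          (((α_ V A A).hom ≫ (V ◁ mu) ≫ psi) ▷ V) ≫ phi A mu sig := by rw [hm]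
    _ = (α_ V A V).inv ≫
          ((((ρ_ V).inv ▷ A) ≫ (α_ V (𝟙_ C) A).hom ≫ (V ◁ ((eta ▷ A) ≫ mu)) ≫ psi) ▷ V) ≫
          phi A mu sig := by monoidal
    _ = (α_ V A V).inv ≫
          ((((ρ_ V).inv ▷ A) ≫ (α_ V (𝟙_ C) A).hom ≫ (V ◁ (λ_ A).hom) ≫ psi) ▷ V) ≫
          phi A mu sig := by rw [hA.1]
    _ = om A V mu psi sig := by simp only [om, phi]; monoidal

lemma IC5b (htw : Twisted A V mu psi sig) (hs : sig ≫ nabla A V eta mu psi = sig) :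
    (V ◁ gam A V eta psi) ≫ om A V mu psi sig = sig := by
  calc (V ◁ gam A V eta psi) ≫ om A V mu psi sig
      = (ρ_ (V ⊗ V)).inv ≫ ((V ⊗ V) ◁ eta) ≫
          ((α_ V V A).hom ≫ (V ◁ psi) ≫ (α_ V A V).inv ≫ (psi ▷ V) ≫ phi A mu sig) := by
        simp only [gam, om]; monoidal
    _ = (ρ_ (V ⊗ V)).inv ≫ (((V ⊗ V) ◁ eta) ≫ (sig ▷ A)) ≫ phi A mu psi := by
        rw [← htw]; simp only [Category.assoc]
    _ = (ρ_ (V ⊗ V)).inv ≫ ((sig ▷ (𝟙_ C)) ≫ ((A ⊗ V) ◁ eta)) ≫ phi A mu psi := by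
        rw [whisker_exchange]
    _ = sig ≫ ((ρ_ (A ⊗ V)).inv ≫ ((A ⊗ V) ◁ eta) ≫ phi A mu psi) := by monoidal
    _ = sig := by rw [← nabla]; exact hs

lemma IC5 (hA : IsMon A eta mu) (hm : Measuring A V mu psi)
    (htw : Twisted A V mu psi sig) (hs : sig ≫ nabla A V eta mu psi = sig) :
    (V ◁ nabla A V eta mu psi) ≫ om A V mu psi sig = om A V mu psi sig := by
  have hm' : (V ◁ mu) ≫ psi = (α_ V A A).inv ≫ ((psi ▷ A) ≫ phi A mu psi) := by
    rw [hm]; simp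
  calc (V ◁ nabla A V eta mu psi) ≫ om A V mu psi sig
      = (V ◁ (A ◁ gam A V eta psi)) ≫ (V ◁ (α_ A A V).inv) ≫ (α_ V (A ⊗ A) V).inv ≫
          (((V ◁ mu) ≫ psi) ▷ V) ≫ phi A mu sig := by
        simp only [nabla_eq, tmap, om]; monoidal
    _ = (V ◁ (A ◁ gam A V eta psi)) ≫ (V ◁ (α_ A A V).inv) ≫ (α_ V (A ⊗ A) V).inv ≫
          (((α_ V A A).inv ≫ ((psi ▷ A) ≫ phi A mu psi)) ▷ V) ≫ phi A mu sig := by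
        rw [hm']
    _ = (V ◁ (A ◁ gam A V eta psi)) ≫ (V ◁ (α_ A A V).inv) ≫ (α_ V (A ⊗ A) V).inv ≫
          (((α_ V A A).inv ≫ (psi ▷ A)) ▷ V) ≫ ((α_ A V A).hom ▷ V) ≫
          ((A ◁ psi) ▷ V) ≫ (α_ A (A ⊗ V) V).hom ≫ (A ◁ (α_ A V V).hom) ≫
          (α_ A A (V ⊗ V)).inv ≫ ((mu ▷ (V ⊗ V)) ≫ (A ◁ sig)) ≫
          (α_ A A V).inv ≫ (mu ▷ V) := by simp only [phi]; monoidal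
    _ = (V ◁ (A ◁ gam A V eta psi)) ≫ (V ◁ (α_ A A V).inv) ≫ (α_ V (A ⊗ A) V).inv ≫
          (((α_ V A A).inv ≫ (psi ▷ A)) ▷ V) ≫ ((α_ A V A).hom ▷ V) ≫
          ((A ◁ psi) ▷ V) ≫ (α_ A (A ⊗ V) V).hom ≫ (A ◁ (α_ A V V).hom) ≫
          (α_ A A (V ⊗ V)).inv ≫ (((A ⊗ A) ◁ sig) ≫ (mu ▷ (A ⊗ V))) ≫
          (α_ A A V).inv ≫ (mu ▷ V) := by rw [whisker_exchange]
    _ = (V ◁ (A ◁ gam A V eta psi)) ≫ (V ◁ (α_ A A V).inv) ≫ (α_ V (A ⊗ A) V).inv ≫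
          (((α_ V A A).inv ≫ (psi ▷ A)) ▷ V) ≫ ((α_ A V A).hom ▷ V) ≫
          ((A ◁ psi) ▷ V) ≫ (α_ A (A ⊗ V) V).hom ≫ (A ◁ (α_ A V V).hom) ≫
          (α_ A A (V ⊗ V)).inv ≫ ((A ⊗ A) ◁ sig) ≫ (α_ (A ⊗ A) A V).inv ≫
          (((mu ▷ A) ≫ mu) ▷ V) := by monoidal
    _ = (V ◁ (A ◁ gam A V eta psi)) ≫ (V ◁ (α_ A A V).inv) ≫ (α_ V (A ⊗ A) V).inv ≫
          (((α_ V A A).inv ≫ (psi ▷ A)) ▷ V) ≫ ((α_ A V A).hom ▷ V) ≫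
          ((A ◁ psi) ▷ V) ≫ (α_ A (A ⊗ V) V).hom ≫ (A ◁ (α_ A V V).hom) ≫
          (α_ A A (V ⊗ V)).inv ≫ ((A ⊗ A) ◁ sig) ≫ (α_ (A ⊗ A) A V).inv ≫
          (((α_ A A A).hom ≫ (A ◁ mu) ≫ mu) ▷ V) := by rw [hA.2.2]
    _ = (α_ V A V).inv ≫ (((V ⊗ A) ◁ gam A V eta psi) ≫ (psi ▷ (A ⊗ V))) ≫
          (α_ A V (A ⊗ V)).hom ≫ tmap A mu (om A V mu psi sig) := by
        simp only [om, phi, tmap]; monoidal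
    _ = (α_ V A V).inv ≫ ((psi ▷ V) ≫ ((A ⊗ V) ◁ gam A V eta psi)) ≫
          (α_ A V (A ⊗ V)).hom ≫ tmap A mu (om A V mu psi sig) := by
        rw [whisker_exchange]
    _ = (α_ V A V).inv ≫ (psi ▷ V) ≫ (α_ A V V).hom ≫ (A ◁ (V ◁ gam A V eta psi)) ≫
          tmap A mu (om A V mu psi sig) := by monoidal
    _ = (α_ V A V).inv ≫ (psi ▷ V) ≫ (α_ A V V).hom ≫
          tmap A mu ((V ◁ gam A V eta psi) ≫ om A V mu psi sig) := by
        rw [whiskerLeft_tmap]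
    _ = (α_ V A V).inv ≫ (psi ▷ V) ≫ (α_ A V V).hom ≫ tmap A mu sig := by
        rw [IC5b htw hs]
    _ = om A V mu psi sig := by simp only [om, phi, tmap]

lemma nablaR_prod (hA : IsMon A eta mu) (hm : Measuring A V mu psi) :
    (nabla A V eta mu psi ▷ (A ⊗ V)) ≫ prodAV A V mu psi sig = prodAV A V mu psi sig := by
  rw [prod_eq hA, nabla_eq]
  calc (tmap A mu (gam A V eta psi) ▷ (A ⊗ V)) ≫ (α_ A V (A ⊗ V)).hom ≫
        tmap A mu (om A V mu psi sig)
      = ((A ◁ gam A V eta psi) ▷ (A ⊗ V)) ≫ ((α_ A A V).inv ▷ (A ⊗ V)) ≫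
          (α_ (A ⊗ A) V (A ⊗ V)).hom ≫
          ((mu ▷ (V ⊗ (A ⊗ V))) ≫ tmap A mu (om A V mu psi sig)) := by
        simp only [tmap]; monoidal
    _ = ((A ◁ gam A V eta psi) ▷ (A ⊗ V)) ≫ ((α_ A A V).inv ▷ (A ⊗ V)) ≫
          (α_ (A ⊗ A) V (A ⊗ V)).hom ≫ (α_ A A (V ⊗ (A ⊗ V))).hom ≫
          tmap A mu (tmap A mu (om A V mu psi sig)) := by
        rw [mu_tmap hA]
    _ = (α_ A V (A ⊗ V)).hom ≫
          (A ◁ ((gam A V eta psi ▷ (A ⊗ V)) ≫ (α_ A V (A ⊗ V)).hom)) ≫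
          tmap A mu (tmap A mu (om A V mu psi sig)) := by monoidal
    _ = (α_ A V (A ⊗ V)).hom ≫
          tmap A mu (((gam A V eta psi ▷ (A ⊗ V)) ≫ (α_ A V (A ⊗ V)).hom) ≫
            tmap A mu (om A V mu psi sig)) := by rw [whiskerLeft_tmap]
    _ = (α_ A V (A ⊗ V)).hom ≫ tmap A mu (om A V mu psi sig) := by
        rw [Category.assoc, IC4 hA hm]

lemma nablaL_prod (hA : IsMon A eta mu) (hm : Measuring A V mu psi)
    (htw : Twisted A V mu psi sig) (hs : sig ≫ nabla A V eta mu psi = sig) :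
    ((A ⊗ V) ◁ nabla A V eta mu psi) ≫ prodAV A V mu psi sig = prodAV A V mu psi sig := by
  rw [prod_eq hA]
  calc ((A ⊗ V) ◁ nabla A V eta mu psi) ≫ (α_ A V (A ⊗ V)).hom ≫
        tmap A mu (om A V mu psi sig)
      = (α_ A V (A ⊗ V)).hom ≫ (A ◁ (V ◁ nabla A V eta mu psi)) ≫
          tmap A mu (om A V mu psi sig) := by monoidal
    _ = (α_ A V (A ⊗ V)).hom ≫
          tmap A mu ((V ◁ nabla A V eta mu psi) ≫ om A V mu psi sig) := by
        rw [whiskerLeft_tmap]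
    _ = (α_ A V (A ⊗ V)).hom ≫ tmap A mu (om A V mu psi sig) := by
        rw [IC5 hA hm htw hs]

end Lemmas

section Lemmas2
variable {A : C} {eta : 𝟙_ C ⟶ A} {mu : A ⊗ A ⟶ A}

lemma lin_aux (hA : IsMon A eta mu) {V W PV PW : C}
    (psiV : V ⊗ A ⟶ A ⊗ V) (psiW : W ⊗ A ⟶ A ⊗ W)
    (pV : A ⊗ V ⟶ PV) (iV : PV ⟶ A ⊗ V)
    (hV1 : pV ≫ iV = nabla A V eta mu psiV) (hV2 : iV ≫ pV = 𝟙 PV)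
    (pW : A ⊗ W ⟶ PW) (iW : PW ⟶ A ⊗ W)
    (hW1 : pW ≫ iW = nabla A W eta mu psiW) (hW2 : iW ≫ pW = 𝟙 PW)
    (f : PV ⟶ PW)
    (hlin : ((A ◁ iV) ≫ (α_ A A V).inv ≫ (mu ▷ V) ≫ pV) ≫ f =
      (A ◁ f) ≫ ((A ◁ iW) ≫ (α_ A A W).inv ≫ (mu ▷ W) ≫ pW)) :
    LeftLin A mu (pV ≫ f ≫ iW) := by
  have hnpV : nabla A V eta mu psiV ≫ pV = pV := by
    rw [← hV1, Category.assoc, hV2, Category.comp_id]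
  have hiW : iW ≫ nabla A W eta mu psiW = iW := by
    rw [← hW1, ← Category.assoc, hW2, Category.id_comp]
  have hiWt : tmap A mu iW ≫ nabla A W eta mu psiW = tmap A mu iW :=
    tmap_nabla hA iW hiW
  have key : (A ◁ iV) ≫ (α_ A A V).inv ≫ (mu ▷ V) ≫ pV ≫ f ≫ iW =
      (A ◁ (f ≫ iW)) ≫ (α_ A A W).inv ≫ (mu ▷ W) := by
    calc (A ◁ iV) ≫ (α_ A A V).inv ≫ (mu ▷ V) ≫ pV ≫ f ≫ iW
        = (((A ◁ iV) ≫ (α_ A A V).inv ≫ (mu ▷ V) ≫ pV) ≫ f) ≫ iW := by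
          simp only [Category.assoc]
      _ = ((A ◁ f) ≫ ((A ◁ iW) ≫ (α_ A A W).inv ≫ (mu ▷ W) ≫ pW)) ≫ iW := by rw [hlin]
      _ = (A ◁ f) ≫ (tmap A mu iW ≫ (pW ≫ iW)) := by simp only [tmap, Category.assoc]
      _ = (A ◁ f) ≫ (tmap A mu iW ≫ nabla A W eta mu psiW) := by rw [hW1]
      _ = (A ◁ f) ≫ tmap A mu iW := by rw [hiWt]
      _ = (A ◁ (f ≫ iW)) ≫ (α_ A A W).inv ≫ (mu ▷ W) := by
          rw [whiskerLeft_tmap]; simp [tmap]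
  unfold LeftLin
  calc (mu ▷ V) ≫ (pV ≫ f ≫ iW)
      = ((mu ▷ V) ≫ nabla A V eta mu psiV) ≫ pV ≫ f ≫ iW := by
        conv_lhs => rw [show pV = nabla A V eta mu psiV ≫ pV from hnpV.symm]
        simp only [Category.assoc]
    _ = ((α_ A A V).hom ≫ (A ◁ nabla A V eta mu psiV) ≫ (α_ A A V).inv ≫ (mu ▷ V)) ≫
          pV ≫ f ≫ iW := by rw [lin_nabla hA]
    _ = (α_ A A V).hom ≫ (A ◁ (pV ≫ iV)) ≫ (α_ A A V).inv ≫ (mu ▷ V) ≫ pV ≫ f ≫ iW := by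
        rw [← hV1]; simp only [Category.assoc]
    _ = (α_ A A V).hom ≫ (A ◁ pV) ≫
          ((A ◁ iV) ≫ (α_ A A V).inv ≫ (mu ▷ V) ≫ pV ≫ f ≫ iW) := by
        simp only [MonoidalCategory.whiskerLeft_comp, Category.assoc]
    _ = (α_ A A V).hom ≫ (A ◁ pV) ≫
          ((A ◁ (f ≫ iW)) ≫ (α_ A A W).inv ≫ (mu ▷ W)) := by rw [key]
    _ = (α_ A A V).hom ≫ (A ◁ (pV ≫ f ≫ iW)) ≫ (α_ A A W).inv ≫ (mu ▷ W) := by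
        simp only [MonoidalCategory.whiskerLeft_comp, Category.assoc]

end Lemmas2

/-- Theorem, (i) ⟹ (ii): an equivalence of weak crossed products
yields left `A`-linear morphisms `T`, `S` preserving preunit and product with
`S ∘ T = ∇_{A⊗V}` and `T ∘ S = ∇_{A⊗W}`. -/
theorem equiv_gives_TS (A V W : C) (eta : 𝟙_ C ⟶ A) (mu : A ⊗ A ⟶ A)
    (hA : IsMon A eta mu)
    (psiV : V ⊗ A ⟶ A ⊗ V) (sigV : V ⊗ V ⟶ A ⊗ V) (nuV : 𝟙_ C ⟶ A ⊗ V)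
    (psiW : W ⊗ A ⟶ A ⊗ W) (sigW : W ⊗ W ⟶ A ⊗ W) (nuW : 𝟙_ C ⟶ A ⊗ W)
    (hV : WCPpre A V eta mu psiV sigV nuV) (hW : WCPpre A W eta mu psiW sigW nuW)
    (PV : C) (pV : A ⊗ V ⟶ PV) (iV : PV ⟶ A ⊗ V)
    (hV1 : pV ≫ iV = nabla A V eta mu psiV) (hV2 : iV ≫ pV = 𝟙 PV)
    (PW : C) (pW : A ⊗ W ⟶ PW) (iW : PW ⟶ A ⊗ W)
    (hW1 : pW ≫ iW = nabla A W eta mu psiW) (hW2 : iW ≫ pW = 𝟙 PW)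
    (e : PV ≅ PW)
    (hunit : (nuV ≫ pV) ≫ e.hom = nuW ≫ pW)
    (hmul : ((iV ⊗ₘ iV) ≫ prodAV A V mu psiV sigV ≫ pV) ≫ e.hom =
      (e.hom ⊗ₘ e.hom) ≫ ((iW ⊗ₘ iW) ≫ prodAV A W mu psiW sigW ≫ pW))
    (hlin : ((A ◁ iV) ≫ (α_ A A V).inv ≫ (mu ▷ V) ≫ pV) ≫ e.hom =
      (A ◁ e.hom) ≫ ((A ◁ iW) ≫ (α_ A A W).inv ≫ (mu ▷ W) ≫ pW)) :
    ∃ (T : A ⊗ V ⟶ A ⊗ W) (S : A ⊗ W ⟶ A ⊗ V),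
      LeftLin A mu T ∧ LeftLin A mu S ∧ nuV ≫ T = nuW ∧
      prodAV A V mu psiV sigV ≫ T = (T ⊗ₘ T) ≫ prodAV A W mu psiW sigW ∧
      T ≫ S = nabla A V eta mu psiV ∧ S ≫ T = nabla A W eta mu psiW := by
  obtain ⟨⟨hmV, htwV, hcoV, hsV⟩, hp1V, hp2V, hp3V⟩ := hV
  obtain ⟨⟨hmW, htwW, hcoW, hsW⟩, hp1W, hp2W, hp3W⟩ := hW
  have hlin2 : ((A ◁ iW) ≫ (α_ A A W).inv ≫ (mu ▷ W) ≫ pW) ≫ e.inv =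
      (A ◁ e.inv) ≫ ((A ◁ iV) ≫ (α_ A A V).inv ≫ (mu ▷ V) ≫ pV) := by
    rw [Iso.comp_inv_eq, Category.assoc, hlin,
      ← MonoidalCategory.whiskerLeft_comp_assoc, e.inv_hom_id,
      MonoidalCategory.whiskerLeft_id, Category.id_comp]
  refine ⟨pV ≫ e.hom ≫ iW, pW ≫ e.inv ≫ iV,
    lin_aux hA psiV psiW pV iV hV1 hV2 pW iW hW1 hW2 e.hom hlin,
    lin_aux hA psiW psiV pW iW hW1 hW2 pV iV hV1 hV2 e.inv hlin2, ?_, ?_, ?_, ?_⟩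
  · calc nuV ≫ pV ≫ e.hom ≫ iW
        = ((nuV ≫ pV) ≫ e.hom) ≫ iW := by simp only [Category.assoc]
      _ = (nuW ≫ pW) ≫ iW := by rw [hunit]
      _ = nuW ≫ nabla A W eta mu psiW := by rw [Category.assoc, hW1]
      _ = nuW := nu_nabla hA hp3W
  · have m1 : (iV ⊗ₘ iV) ≫ prodAV A V mu psiV sigV ≫ (pV ≫ e.hom ≫ iW) =
        (e.hom ⊗ₘ e.hom) ≫ ((iW ⊗ₘ iW) ≫ prodAV A W mu psiW sigW) := by
      calc (iV ⊗ₘ iV) ≫ prodAV A V mu psiV sigV ≫ (pV ≫ e.hom ≫ iW)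
          = (((iV ⊗ₘ iV) ≫ prodAV A V mu psiV sigV ≫ pV) ≫ e.hom) ≫ iW := by
            simp only [Category.assoc]
        _ = ((e.hom ⊗ₘ e.hom) ≫ ((iW ⊗ₘ iW) ≫ prodAV A W mu psiW sigW ≫ pW)) ≫ iW := by
            rw [hmul]
        _ = (e.hom ⊗ₘ e.hom) ≫ ((iW ⊗ₘ iW) ≫ prodAV A W mu psiW sigW ≫ (pW ≫ iW)) := by
            simp only [Category.assoc]
        _ = (e.hom ⊗ₘ e.hom) ≫
              ((iW ⊗ₘ iW) ≫ prodAV A W mu psiW sigW ≫ nabla A W eta mu psiW) := by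
            rw [hW1]
        _ = (e.hom ⊗ₘ e.hom) ≫ ((iW ⊗ₘ iW) ≫ prodAV A W mu psiW sigW) := by
            rw [prod_nabla hA hsW]
    have habs : (nabla A V eta mu psiV ⊗ₘ nabla A V eta mu psiV) ≫
        prodAV A V mu psiV sigV = prodAV A V mu psiV sigV := by
      calc (nabla A V eta mu psiV ⊗ₘ nabla A V eta mu psiV) ≫ prodAV A V mu psiV sigV
          = (nabla A V eta mu psiV ▷ (A ⊗ V)) ≫
              (((A ⊗ V) ◁ nabla A V eta mu psiV) ≫ prodAV A V mu psiV sigV) := by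
            rw [MonoidalCategory.tensorHom_def]; simp only [Category.assoc]
        _ = (nabla A V eta mu psiV ▷ (A ⊗ V)) ≫ prodAV A V mu psiV sigV := by
            rw [nablaL_prod hA hmV htwV hsV]
        _ = prodAV A V mu psiV sigV := nablaR_prod hA hmV
    calc prodAV A V mu psiV sigV ≫ (pV ≫ e.hom ≫ iW)
        = ((nabla A V eta mu psiV ⊗ₘ nabla A V eta mu psiV) ≫ prodAV A V mu psiV sigV) ≫
            (pV ≫ e.hom ≫ iW) := by rw [habs]
      _ = (pV ⊗ₘ pV) ≫ ((iV ⊗ₘ iV) ≫ (prodAV A V mu psiV sigV ≫ (pV ≫ e.hom ≫ iW))) := by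
          rw [← hV1, ← MonoidalCategory.tensorHom_comp_tensorHom]; simp only [Category.assoc]
      _ = (pV ⊗ₘ pV) ≫ ((e.hom ⊗ₘ e.hom) ≫ ((iW ⊗ₘ iW) ≫ prodAV A W mu psiW sigW)) := by
          rw [m1]
      _ = ((pV ≫ e.hom ≫ iW) ⊗ₘ (pV ≫ e.hom ≫ iW)) ≫ prodAV A W mu psiW sigW := by
          rw [show ((pV ≫ e.hom ≫ iW) ⊗ₘ (pV ≫ e.hom ≫ iW)) =
            (pV ⊗ₘ pV) ≫ (e.hom ⊗ₘ e.hom) ≫ (iW ⊗ₘ iW) from by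
              rw [← MonoidalCategory.tensorHom_comp_tensorHom, ← MonoidalCategory.tensorHom_comp_tensorHom]]
          simp only [Category.assoc]
  · calc (pV ≫ e.hom ≫ iW) ≫ pW ≫ e.inv ≫ iV
        = pV ≫ e.hom ≫ ((iW ≫ pW) ≫ (e.inv ≫ iV)) := by simp only [Category.assoc]
      _ = pV ≫ e.hom ≫ e.inv ≫ iV := by rw [hW2, Category.id_comp]
      _ = pV ≫ iV := by rw [Iso.hom_inv_id_assoc]
      _ = nabla A V eta mu psiV := hV1
  · calc (pW ≫ e.inv ≫ iV) ≫ pV ≫ e.hom ≫ iW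
        = pW ≫ e.inv ≫ ((iV ≫ pV) ≫ (e.hom ≫ iW)) := by simp only [Category.assoc]
      _ = pW ≫ e.inv ≫ e.hom ≫ iW := by rw [hV2, Category.id_comp]
      _ = pW ≫ iW := by rw [Iso.inv_hom_id_assoc]
      _ = nabla A W eta mu psiW := hW1


end WeakCrossed
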